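/- Let P be a finitely generated perfect group (i.e., P equals its own derived subgroup [P,P]) and let G be a non-abelian finitely generated group with finite palindromic width k = pw(G, X) with respect to a finite generating set X. Then there exists c ∈ G (possibly c = 1) such that for any finite generating set S of P, every element of the restricted regular wreath product P ≀ G is a product of at most k + 1 palindromes with respect to the generating set consisting of the canonical copies of X ∪ {c} and of S; that is, pw(P ≀ G, X ∪ {c} ∪ S) ≤ k + 1. -/

import Mathlib

open Function

section WreathDefs

variable (G A : Type*) [Group G] [Group A]

/-- The subgroup of finitely supported functions `A → G` (pointwise operations). -/
def restrictedBase : Subgroup (A → G) where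
  carrier := {f | (Function.mulSupport f).Finite}
  one_mem' := by simp [Function.mulSupport_one]
  mul_mem' := fun hf hg => (hf.union hg).subset (Function.mulSupport_mul _ _)
  inv_mem' := fun hf => by simpa [Function.mulSupport_inv] using hf

variable {G A}

lemma shift_mem (a : A) (f : restrictedBase G A) :
    (fun x => (f : A → G) (a * x)) ∈ restrictedBase G A := by
  have h : Function.mulSupport (fun x => (f : A → G) (a * x)) =
      (fun x : A => a * x) ⁻¹' Function.mulSupport (f : A → G) :=
    Function.mulSupport_comp_eq_preimage _ _
  show (Function.mulSupport _).Finite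
  rw [h]
  exact f.2.preimage (mul_right_injective a).injOn

/-- The translation automorphism of the restricted base, `(a • f) x = f (a⁻¹ * x)`. -/
noncomputable def shiftEquiv (a : A) : restrictedBase G A ≃* restrictedBase G A where
  toFun f := ⟨fun x => (f : A → G) (a⁻¹ * x), shift_mem a⁻¹ f⟩
  invFun f := ⟨fun x => (f : A → G) (a * x), shift_mem a f⟩
  left_inv f := by ext x; simp
  right_inv f := by ext x; simp
  map_mul' f g := by ext x; simp

variable (G A)

/-- The translation action of `A` on finitely supported functions `A → G`. -/
noncomputable def wreathAction : A →* MulAut (restrictedBase G A) where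
  toFun a := shiftEquiv a
  map_one' := by ext f x; simp [shiftEquiv]
  map_mul' a b := by ext f x; simp [shiftEquiv, mul_assoc]

/-- The restricted regular wreath product `G ≀ A`. -/
noncomputable abbrev Wreath := restrictedBase G A ⋊[wreathAction G A] A

variable {G A}

/-- The finitely supported function equal to `g` at `1` and trivial elsewhere. -/
noncomputable def atOne (g : G) : restrictedBase G A :=
  letI := Classical.decEq A
  ⟨fun x => if x = 1 then g else 1, by
    apply Set.Finite.subset (Set.finite_singleton (1 : A))
    intro x hx
    simp only [Function.mem_mulSupport] at hx
    by_contra hx1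
    exact hx (if_neg (by simpa using hx1))⟩

/-- The natural generating set of `G ≀ A` built from generating sets of the factors. -/
noncomputable def wreathGens (XB : Set G) (XA : Set A) : Set (Wreath G A) :=
  ((fun g => SemidirectProduct.inl (atOne g)) '' XB) ∪ (SemidirectProduct.inr '' XA)

end WreathDefs

section Palindromes

variable {W : Type*} [Group W]

/-- `g` is a palindrome with respect to `S`: it is the product of a word over `S`
(entries in `S ∪ S⁻¹`) which reads the same forwards and backwards. -/
def IsPalindrome (S : Set W) (g : W) : Prop :=
  ∃ l : List W, (∀ x ∈ l, x ∈ S ∪ S⁻¹) ∧ l.reverse = l ∧ l.prod = g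

/-- `g` is a product of at most `n` palindromes with respect to `S`. -/
def ProdOfPal (S : Set W) (n : ℕ) (g : W) : Prop :=
  ∃ l : List W, l.length ≤ n ∧ (∀ p ∈ l, IsPalindrome S p) ∧ l.prod = g

/-- The palindromic width of a group with respect to `S` (`⊤` if infinite). -/
noncomputable def palWidth (S : Set W) : ℕ∞ :=
  sInf {n : ℕ∞ | ∃ m : ℕ, n = (m : ℕ∞) ∧ ∀ g : W, ProdOfPal S m g}

/-- The word length of `g` with respect to `S`. -/
noncomputable def wordLength (S : Set W) (g : W) : ℕ :=
  sInf {n : ℕ | ∃ l : List W, l.length = n ∧ (∀ x ∈ l, x ∈ S ∪ S⁻¹) ∧ l.prod = g}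

end Palindromes
section PW8Base

variable {P G : Type*} [Group P] [Group G]

/-- `atOne` as a monoid hom. -/
noncomputable def pw8.atOneHom : P →* restrictedBase P G where
  toFun := atOne
  map_one' := by
    ext x
    simp [atOne]
  map_mul' p q := by
    ext x
    simp only [atOne, Subgroup.coe_mul, Pi.mul_apply]
    split <;> simp

@[simp] lemma pw8.atOne_one : (atOne 1 : restrictedBase P G) = 1 :=
  pw8.atOneHom.map_one

lemma pw8.atOne_mul (p q : P) : (atOne (p * q) : restrictedBase P G) = atOne p * atOne q :=
  pw8.atOneHom.map_mul p q

lemma pw8.atOne_inv (p : P) : (atOne p⁻¹ : restrictedBase P G) = (atOne p)⁻¹ :=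
  (pw8.atOneHom (G := G)).map_inv p

lemma pw8.atOne_apply_one (p : P) : ((atOne p : restrictedBase P G) : G → P) 1 = p := by
  simp [atOne]

lemma pw8.atOne_apply_ne (p : P) {x : G} (h : x ≠ 1) :
    ((atOne p : restrictedBase P G) : G → P) x = 1 := by
  simp [atOne, h]

/-- The function supported at `x` with value `p`. -/
noncomputable def pw8.dlt (x : G) (p : P) : restrictedBase P G :=
  wreathAction P G x (atOne p)

lemma pw8.dlt_apply (x : G) (p : P) (y : G) :
    ((pw8.dlt x p : restrictedBase P G) : G → P) y
      = ((atOne p : restrictedBase P G) : G → P) (x⁻¹ * y) := rfl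

lemma pw8.dlt_apply_self (x : G) (p : P) :
    ((pw8.dlt x p : restrictedBase P G) : G → P) x = p := by
  rw [pw8.dlt_apply, inv_mul_cancel, pw8.atOne_apply_one]

lemma pw8.dlt_apply_ne (x : G) (p : P) {y : G} (h : y ≠ x) :
    ((pw8.dlt x p : restrictedBase P G) : G → P) y = 1 := by
  rw [pw8.dlt_apply]
  exact pw8.atOne_apply_ne p (by
    intro hc
    exact h (by rwa [inv_mul_eq_one, eq_comm] at hc))

/-- `dlt x` as a monoid hom. -/
noncomputable def pw8.dltHom (x : G) : P →* restrictedBase P G :=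
  (wreathAction P G x).toMonoidHom.comp (pw8.atOneHom)

lemma pw8.dltHom_apply (x : G) (p : P) : pw8.dltHom x p = pw8.dlt x p := rfl

@[simp] lemma pw8.dlt_one (x : G) : pw8.dlt x (1 : P) = 1 := by
  rw [← pw8.dltHom_apply]; exact (pw8.dltHom x).map_one

lemma pw8.dlt_mul (x : G) (p q : P) : pw8.dlt x (p * q) = pw8.dlt x p * pw8.dlt x q := by
  rw [← pw8.dltHom_apply, ← pw8.dltHom_apply, ← pw8.dltHom_apply]; exact map_mul _ _ _

lemma pw8.dlt_inv (x : G) (p : P) : pw8.dlt x p⁻¹ = (pw8.dlt x p)⁻¹ := by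
  rw [← pw8.dltHom_apply, ← pw8.dltHom_apply]; exact map_inv _ _

lemma pw8.dlt_one_left (p : P) : pw8.dlt (1 : G) p = atOne p := by
  unfold pw8.dlt
  rw [map_one]
  rfl

lemma pw8.dlt_comm {x y : G} (h : x ≠ y) (p q : P) :
    pw8.dlt x p * pw8.dlt y q = pw8.dlt y q * pw8.dlt x p := by
  apply Subtype.ext
  funext z
  simp only [Subgroup.coe_mul, Pi.mul_apply]
  rcases eq_or_ne z x with rfl | hzx
  · rw [pw8.dlt_apply_ne y q (Ne.symm (by exact fun hc => h hc.symm)), pw8.dlt_apply_self,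
      mul_one, one_mul]
  · rw [pw8.dlt_apply_ne x p hzx, mul_one, one_mul]

end PW8Base
section PW8Gen

variable {P G : Type*} [Group P] [Group G]

noncomputable def pw8.suppF (f : restrictedBase P G) : Finset G :=
  Set.Finite.toFinset (show (Function.mulSupport (f : G → P)).Finite from f.2)

lemma pw8.mem_suppF {f : restrictedBase P G} {x : G} :
    x ∈ pw8.suppF f ↔ (f : G → P) x ≠ 1 := by
  simp [pw8.suppF, Function.mem_mulSupport]

/-- Every element of the restricted base is generated by the `dlt x p`. -/
lemma pw8.base_gen (f : restrictedBase P G) :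
    f ∈ Subgroup.closure {b : restrictedBase P G | ∃ x p, b = pw8.dlt x p} := by
  suffices H : ∀ (n : ℕ) (f : restrictedBase P G), (pw8.suppF f).card = n →
      f ∈ Subgroup.closure {b : restrictedBase P G | ∃ x p, b = pw8.dlt x p} from
    H _ f rfl
  classical
  intro n
  induction n using Nat.strong_induction_on with
  | _ n ih =>
    intro f hcard
    rcases Finset.eq_empty_or_nonempty (pw8.suppF f) with h0 | ⟨x, hx⟩
    · have : f = 1 := by
        apply Subtype.ext
        funext y
        by_contra hy
        exact (Finset.eq_empty_iff_forall_notMem.mp h0 y) (pw8.mem_suppF.mpr hy)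
      rw [this]
      exact Subgroup.one_mem _
    · set g : restrictedBase P G := (pw8.dlt x ((f : G → P) x))⁻¹ * f with hg
      have hgval : ∀ y, (g : G → P) y =
          (((pw8.dlt x ((f : G → P) x)) : G → P) y)⁻¹ * (f : G → P) y := by
        intro y
        simp [hg]
      have hsub : pw8.suppF g ⊆ (pw8.suppF f).erase x := by
        intro y hy
        have hy' := pw8.mem_suppF.mp hy
        rcases eq_or_ne y x with rfl | hyx
        · exfalso
          apply hy'
          rw [hgval, pw8.dlt_apply_self, inv_mul_cancel]
        · refine Finset.mem_erase.mpr ⟨hyx, pw8.mem_suppF.mpr ?_⟩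
          intro hfy
          apply hy'
          rw [hgval, pw8.dlt_apply_ne _ _ hyx, hfy, inv_one, one_mul]
      have hxmem : x ∈ pw8.suppF f := hx
      have hlt : (pw8.suppF g).card < n := by
        calc (pw8.suppF g).card ≤ ((pw8.suppF f).erase x).card := Finset.card_le_card hsub
        _ < (pw8.suppF f).card := Finset.card_erase_lt_of_mem hxmem
        _ = n := hcard
      have hgmem := ih _ hlt g rfl
      have : f = pw8.dlt x ((f : G → P) x) * g := by
        rw [hg, ← mul_assoc, mul_inv_cancel, one_mul]
      rw [this]
      exact Subgroup.mul_mem _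
        (Subgroup.subset_closure ⟨x, (f : G → P) x, rfl⟩) hgmem

/-- The canonical generating set generates the wreath product. -/
lemma pw8.wreath_gen {S : Set P} {Y : Set G}
    (hS : Subgroup.closure S = ⊤) (hY : Subgroup.closure Y = ⊤) :
    Subgroup.closure (wreathGens S Y) = ⊤ := by
  set gens := wreathGens S Y with hgens
  rw [eq_top_iff]
  intro w _
  have hinr : ∀ g : G, SemidirectProduct.inr (φ := wreathAction P G) g ∈
      Subgroup.closure gens := by
    intro g
    have : g ∈ Subgroup.closure Y := by rw [hY]; trivial
    refine Subgroup.closure_induction (fun y hy => ?_) ?_ (fun u v _ _ hu hv => ?_)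
      (fun u _ hu => ?_) this
    · exact Subgroup.subset_closure (Or.inr ⟨y, hy, rfl⟩)
    · rw [map_one]; exact Subgroup.one_mem _
    · rw [map_mul]; exact Subgroup.mul_mem _ hu hv
    · rw [map_inv]; exact Subgroup.inv_mem _ hu
  have hatOne : ∀ p : P, SemidirectProduct.inl (φ := wreathAction P G) (atOne p) ∈
      Subgroup.closure gens := by
    intro p
    have : p ∈ Subgroup.closure S := by rw [hS]; trivial
    refine Subgroup.closure_induction (fun s hs => ?_) ?_ (fun u v _ _ hu hv => ?_)
      (fun u _ hu => ?_) this
    · exact Subgroup.subset_closure (Or.inl ⟨s, hs, rfl⟩)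
    · rw [pw8.atOne_one, map_one]; exact Subgroup.one_mem _
    · rw [pw8.atOne_mul, map_mul]; exact Subgroup.mul_mem _ hu hv
    · rw [pw8.atOne_inv, map_inv]; exact Subgroup.inv_mem _ hu
  have hdlt : ∀ (x : G) (p : P), SemidirectProduct.inl (φ := wreathAction P G)
      (pw8.dlt x p) ∈ Subgroup.closure gens := by
    intro x p
    rw [pw8.dlt, SemidirectProduct.inl_aut]
    exact Subgroup.mul_mem _ (Subgroup.mul_mem _ (hinr x) (hatOne p))
      (hinr x⁻¹)
  have hbase : ∀ f : restrictedBase P G,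
      SemidirectProduct.inl (φ := wreathAction P G) f ∈ Subgroup.closure gens := by
    intro f
    refine Subgroup.closure_induction (fun b hb => ?_) ?_ (fun u v _ _ hu hv => ?_)
      (fun u _ hu => ?_) (pw8.base_gen f)
    · obtain ⟨x, p, rfl⟩ := hb
      exact hdlt x p
    · rw [map_one]; exact Subgroup.one_mem _
    · rw [map_mul]; exact Subgroup.mul_mem _ hu hv
    · rw [map_inv]; exact Subgroup.inv_mem _ hu
  rw [← SemidirectProduct.inl_left_mul_inr_right w]
  exact Subgroup.mul_mem _ (hbase w.left) (hinr w.right)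

end PW8Gen
section PW8Pal

variable {W : Type*} [Group W]

def pw8.pairGens (gens : Set W) : Set (W × W) :=
  {q | ∃ l ∈ gens ∪ gens⁻¹, q = (l, l⁻¹)}

lemma pw8.letters_inv {gens : Set W} {x : W} (h : x ∈ gens ∪ gens⁻¹) :
    x⁻¹ ∈ gens ∪ gens⁻¹ := by
  rcases h with h | h
  · exact Or.inr (by simpa [Set.mem_inv] using h)
  · exact Or.inl (by simpa [Set.mem_inv] using h)

lemma pw8.reverse_prod (l : List W) :
    l.reverse.prod = ((l.map (fun y => y⁻¹)).prod)⁻¹ := by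
  rw [List.prod_inv_reverse (l.map (fun y => y⁻¹)), List.map_map]
  simp

lemma pw8.listpair_mem {gens : Set W} (l : List W) (hl : ∀ x ∈ l, x ∈ gens ∪ gens⁻¹) :
    (l.prod, (l.map (fun y => y⁻¹)).prod) ∈ Subgroup.closure (pw8.pairGens gens) := by
  induction l with
  | nil => exact Subgroup.one_mem _
  | cons a l ih =>
    have ha : a ∈ gens ∪ gens⁻¹ := hl a List.mem_cons_self
    have hrest := ih (fun x hx => hl x (List.mem_cons_of_mem a hx))
    have hgen : ((a, a⁻¹) : W × W) ∈ Subgroup.closure (pw8.pairGens gens) :=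
      Subgroup.subset_closure ⟨a, ha, rfl⟩
    have := Subgroup.mul_mem _ hgen hrest
    simpa [Prod.mk_mul_mk] using this

lemma pw8.pair_to_list {gens : Set W} {w : W × W}
    (hw : w ∈ Subgroup.closure (pw8.pairGens gens)) :
    ∃ l : List W, (∀ x ∈ l, x ∈ gens ∪ gens⁻¹) ∧ l.prod = w.1 ∧
      (l.map (fun y => y⁻¹)).prod = w.2 := by
  refine Subgroup.closure_induction (fun q hq => ?_) ?_
    (fun u v _ _ hu hv => ?_) (fun u _ hu => ?_) hw
  · obtain ⟨a, ha, rfl⟩ := hq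
    exact ⟨[a], by simpa using ha, by simp, by simp⟩
  · exact ⟨[], by simp, by simp, by simp⟩
  · obtain ⟨l₁, h₁, hp₁, hq₁⟩ := hu
    obtain ⟨l₂, h₂, hp₂, hq₂⟩ := hv
    refine ⟨l₁ ++ l₂, ?_, ?_, ?_⟩
    · intro x hx
      rcases List.mem_append.mp hx with hx | hx
      · exact h₁ x hx
      · exact h₂ x hx
    · rw [List.prod_append, hp₁, hp₂]; rfl
    · rw [List.map_append, List.prod_append, hq₁, hq₂]; rfl
  · obtain ⟨l, h, hp, hq⟩ := hu
    refine ⟨(l.map (fun y => y⁻¹)).reverse, ?_, ?_, ?_⟩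
    · intro x hx
      rw [List.mem_reverse] at hx
      obtain ⟨y, hy, rfl⟩ := List.mem_map.mp hx
      exact pw8.letters_inv (h y hy)
    · rw [← List.prod_inv_reverse, hp]; rfl
    · have key : ((l.map (fun y => y⁻¹)).reverse.map (fun y => y⁻¹)).prod
          = ((l.map (fun y => y⁻¹)).prod)⁻¹ := by
        rw [List.map_reverse, ← List.prod_inv_reverse]
      rw [key, hq]
      rfl

lemma pw8.pal_of_pair_one {gens : Set W} {w : W}
    (h : ((w, 1) : W × W) ∈ Subgroup.closure (pw8.pairGens gens)) :
    IsPalindrome gens w := by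
  obtain ⟨l, hlet, hp, hq⟩ := pw8.pair_to_list h
  refine ⟨l ++ l.reverse, ?_, ?_, ?_⟩
  · intro x hx
    rcases List.mem_append.mp hx with hx | hx
    · exact hlet x hx
    · exact hlet x (List.mem_reverse.mp hx)
  · simp
  · rw [List.prod_append, hp]
    rw [pw8.reverse_prod, hq]
    simp

/-- The subgroup of elements `w` such that `(w,1)` is generated by letter pairs. -/
def pw8.Msub (gens : Set W) : Subgroup W where
  carrier := {w | ((w, 1) : W × W) ∈ Subgroup.closure (pw8.pairGens gens)}
  one_mem' := Subgroup.one_mem (Subgroup.closure (pw8.pairGens gens))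
  mul_mem' := by
    intro a b ha hb
    have ha' : ((a, 1) : W × W) ∈ Subgroup.closure (pw8.pairGens gens) := ha
    have hb' : ((b, 1) : W × W) ∈ Subgroup.closure (pw8.pairGens gens) := hb
    show ((a * b, 1) : W × W) ∈ Subgroup.closure (pw8.pairGens gens)
    simpa [Prod.mk_mul_mk] using Subgroup.mul_mem _ ha' hb'
  inv_mem' := by
    intro a ha
    have ha' : ((a, 1) : W × W) ∈ Subgroup.closure (pw8.pairGens gens) := ha
    show ((a⁻¹, 1) : W × W) ∈ Subgroup.closure (pw8.pairGens gens)
    simpa using Subgroup.inv_mem _ ha'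

lemma pw8.mem_Msub {gens : Set W} {w : W} :
    w ∈ pw8.Msub gens ↔ ((w, 1) : W × W) ∈ Subgroup.closure (pw8.pairGens gens) :=
  Iff.rfl

lemma pw8.exists_pair {gens : Set W} (hgen : Subgroup.closure gens = ⊤) (v : W) :
    ∃ v₂, ((v, v₂) : W × W) ∈ Subgroup.closure (pw8.pairGens gens) := by
  have hv : v ∈ Subgroup.closure gens := by rw [hgen]; trivial
  refine Subgroup.closure_induction (fun y hy => ?_) ?_
    (fun u v _ _ hu hv => ?_) (fun u _ hu => ?_) hv
  · exact ⟨y⁻¹, Subgroup.subset_closure ⟨y, Or.inl hy, rfl⟩⟩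
  · exact ⟨1, Subgroup.one_mem (Subgroup.closure (pw8.pairGens gens))⟩
  · obtain ⟨u₂, hu⟩ := hu
    obtain ⟨v₂, hv⟩ := hv
    exact ⟨u₂ * v₂, by simpa [Prod.mk_mul_mk] using Subgroup.mul_mem _ hu hv⟩
  · obtain ⟨u₂, hu⟩ := hu
    exact ⟨u₂⁻¹, by simpa using Subgroup.inv_mem _ hu⟩

lemma pw8.msub_normal {gens : Set W} (hgen : Subgroup.closure gens = ⊤) :
    (pw8.Msub gens).Normal := by
  constructor
  intro w hw v
  obtain ⟨v₂, hv⟩ := pw8.exists_pair hgen v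
  have hw' : ((w, 1) : W × W) ∈ Subgroup.closure (pw8.pairGens gens) := pw8.mem_Msub.mp hw
  have := Subgroup.mul_mem _ (Subgroup.mul_mem _ hv hw') (Subgroup.inv_mem _ hv)
  have goal : ((v * w * v⁻¹, 1) : W × W) ∈ Subgroup.closure (pw8.pairGens gens) := by
    simpa [Prod.mk_mul_mk] using this
  exact pw8.mem_Msub.mpr goal

end PW8Pal
section PW8Extract

variable {W : Type*} [Group W]

lemma pw8.palWidth_spec (Xs : Set W) (k : ℕ) (hk : palWidth Xs = (k : ℕ∞)) :
    ∀ g : W, ProdOfPal Xs k g := by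
  set T : Set ℕ := {m | ∀ g : W, ProdOfPal Xs m g} with hT
  have hne : T.Nonempty := by
    by_contra h
    rw [Set.not_nonempty_iff_eq_empty] at h
    have : {n : ℕ∞ | ∃ m : ℕ, n = (m : ℕ∞) ∧ ∀ g : W, ProdOfPal Xs m g} = ∅ := by
      ext n
      simp only [Set.mem_setOf_eq, Set.mem_empty_iff_false, iff_false]
      rintro ⟨m, _, hm⟩
      exact absurd (show m ∈ T from hm) (by rw [h]; exact not_false_iff.mpr trivial)
    rw [palWidth, this, sInf_empty] at hk
    exact (ENat.coe_ne_top k) hk.symm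
  have hm₀ : sInf T ∈ T := Nat.sInf_mem hne
  have heq : palWidth Xs = ((sInf T : ℕ) : ℕ∞) := by
    apply le_antisymm
    · exact sInf_le ⟨sInf T, rfl, hm₀⟩
    · apply le_sInf
      rintro n ⟨m, rfl, hm⟩
      exact_mod_cast Nat.sInf_le (show m ∈ T from hm)
  have hkeq : k = sInf T := by
    rw [hk] at heq
    exact_mod_cast heq
  intro g
  rw [hkeq]
  exact hm₀ g

end PW8Extract

section PW8C

variable {G : Type*} [Group G]

/-- Choice of `c` and the key word: a word over `X ∪ {c}` whose product is nontrivial but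
whose letterwise-inverted product is trivial. -/
lemma pw8.exists_keyword (X : Set G) (hX : Subgroup.closure X = ⊤)
    (hna : ∃ a b : G, a * b ≠ b * a) :
    ∃ c : G, ∃ lG : List G,
      (∀ x ∈ lG, x ∈ (X ∪ {c}) ∪ (X ∪ {c})⁻¹) ∧ lG.prod ≠ 1 ∧
        (lG.map (fun y => y⁻¹)).prod = 1 := by
  classical
  -- Step 1: choose c with no inverting endomorphism on X ∪ {c}
  have hstep : ∃ c : G, ¬ ∃ ι : G →* G, ∀ x ∈ X ∪ {c}, ι x = x⁻¹ := by
    by_cases hhom : ∃ ι : G →* G, ∀ x ∈ X, ι x = x⁻¹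
    · obtain ⟨ι, hι⟩ := hhom
      have hc : ∃ c, ι c ≠ c⁻¹ := by
        by_contra h
        push_neg at h
        obtain ⟨a, b, hab⟩ := hna
        apply hab
        have h1 := h (a * b)
        rw [map_mul, h a, h b, mul_inv_rev] at h1
        have := congrArg (fun z => z⁻¹) h1
        have h2 : b * a = a * b := by simpa [mul_inv_rev] using this
        exact h2.symm
      obtain ⟨c, hcne⟩ := hc
      refine ⟨c, ?_⟩
      rintro ⟨ι', hι'⟩
      have hagree : ∀ g : G, ι' g = ι g := by
        intro g
        have hg : g ∈ Subgroup.closure X := by rw [hX]; trivial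
        refine Subgroup.closure_induction (fun x hx => ?_) ?_
          (fun u v _ _ hu hv => ?_) (fun u _ hu => ?_) hg
        · rw [hι' x (Or.inl hx), hι x hx]
        · rw [map_one, map_one]
        · rw [map_mul, map_mul, hu, hv]
        · rw [map_inv, map_inv, hu]
      exact hcne (by rw [← hagree c]; exact hι' c (Or.inr rfl))
    · refine ⟨1, ?_⟩
      rintro ⟨ι', hι'⟩
      exact hhom ⟨ι', fun x hx => hι' x (Or.inl hx)⟩
  obtain ⟨c, hno⟩ := hstep
  set Y : Set G := X ∪ {c} with hYdef
  -- Step 2: a free group word violating letter-inversion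
  have hYtop : Subgroup.closure Y = ⊤ := by
    rw [eq_top_iff, ← hX]
    exact Subgroup.closure_mono Set.subset_union_left
  set e : FreeGroup Y →* G := FreeGroup.lift (fun a => (a : G)) with he_def
  set e' : FreeGroup Y →* G := FreeGroup.lift (fun a => (a : G)⁻¹) with he'_def
  have he : Function.Surjective e := by
    rw [← MonoidHom.range_eq_top, he_def, FreeGroup.range_lift_eq_closure,
      Subtype.range_coe]
    exact hYtop
  have hbad : ∃ w : FreeGroup Y, e w = 1 ∧ e' w ≠ 1 := by
    by_contra h
    push_neg at h
    apply hno
    have key : ∀ u v : FreeGroup Y, e u = e v → e' u = e' v := by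
      intro u v huv
      have h1 : e (u * v⁻¹) = 1 := by rw [map_mul, map_inv, huv, mul_inv_cancel]
      have h2 := h _ h1
      rw [map_mul, map_inv, mul_inv_eq_one] at h2
      exact h2
    set σ := Function.surjInv he with hσ
    refine ⟨{ toFun := fun g => e' (σ g),
              map_one' := ?_, map_mul' := ?_ }, ?_⟩
    · show e' (σ 1) = 1
      have : e (σ 1) = e 1 := by rw [map_one, Function.surjInv_eq he]
      rw [key _ _ this, map_one]
    · intro g h'
      show e' (σ (g * h')) = e' (σ g) * e' (σ h')
      have : e (σ (g * h')) = e (σ g * σ h') := by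
        rw [map_mul, Function.surjInv_eq he, Function.surjInv_eq he,
          Function.surjInv_eq he]
      rw [key _ _ this, map_mul]
    · intro x hx
      show e' (σ x) = x⁻¹
      have : e (σ x) = e (FreeGroup.of (⟨x, hx⟩ : Y)) := by
        rw [Function.surjInv_eq he, he_def, FreeGroup.lift_apply_of]
      rw [key _ _ this, he'_def, FreeGroup.lift_apply_of]
  obtain ⟨w, hw1, hw2⟩ := hbad
  -- Step 3: extract the list
  set lG0 : List G := w.toWord.map (fun p => bif p.2 then (p.1 : G) else (p.1 : G)⁻¹)
    with hlG0
  have h1 : lG0.prod = e w := by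
    conv_rhs => rw [← FreeGroup.mk_toWord (x := w)]
    rw [he_def, FreeGroup.lift_mk]
  have h2 : (lG0.map (fun y => y⁻¹)).prod = e' w := by
    conv_rhs => rw [← FreeGroup.mk_toWord (x := w)]
    rw [he'_def, FreeGroup.lift_mk, hlG0, List.map_map]
    congr 1
    apply List.map_congr_left
    intro p _
    cases hb : p.2 <;> simp [hb]
  have hlet : ∀ x ∈ lG0, x ∈ Y ∪ Y⁻¹ := by
    intro x hx
    rw [hlG0] at hx
    obtain ⟨p, _, rfl⟩ := List.mem_map.mp hx
    cases hb : p.2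
    · simp only [hb, cond_false]
      exact Or.inr (by simpa [Set.mem_inv] using p.1.2)
    · simp only [hb, cond_true]
      exact Or.inl p.1.2
  refine ⟨c, lG0.map (fun y => y⁻¹), ?_, ?_, ?_⟩
  · intro x hx
    obtain ⟨y, hy, rfl⟩ := List.mem_map.mp hx
    exact pw8.letters_inv (hlet y hy)
  · rw [h2]; exact hw2
  · rw [List.map_map]
    have : (lG0.map ((fun y : G => y⁻¹) ∘ (fun y : G => y⁻¹))) = lG0 := by simp
    rw [this, h1, hw1]

end PW8C
section PW8Core

open scoped commutatorElement

variable {P G : Type*} [Group P] [Group G]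

/-- Core lemma: given a word over `Y` with nontrivial product but trivial letter-inverted
product, every element of the base of `P ≀ G` (with `P` perfect) lies in the palindromic
kernel `Msub`. -/
lemma pw8.base_in_Msub (hperf : commutator P = ⊤)
    {S : Set P} (hS : Subgroup.closure S = ⊤)
    {Y : Set G} (hY : Subgroup.closure Y = ⊤)
    (lG : List G) (hlet : ∀ x ∈ lG, x ∈ Y ∪ Y⁻¹) (hprod : lG.prod ≠ 1)
    (hinv : (lG.map (fun y => y⁻¹)).prod = 1) :
    ∀ f : restrictedBase P G,
      SemidirectProduct.inl (φ := wreathAction P G) f ∈ pw8.Msub (wreathGens S Y) := by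
  set gens : Set (Wreath P G) := wreathGens S Y with hgens
  have hWgen : Subgroup.closure gens = ⊤ := pw8.wreath_gen hS hY
  haveI hnorm : (pw8.Msub gens).Normal := pw8.msub_normal hWgen
  set inl : restrictedBase P G →* Wreath P G := SemidirectProduct.inl with hinl
  set inr : G →* Wreath P G := SemidirectProduct.inr with hinr
  -- letters
  have hletter_inl : ∀ s : P, s ∈ S ∪ S⁻¹ → inl (atOne s) ∈ gens ∪ gens⁻¹ := by
    intro s hs
    rcases hs with hs | hs
    · exact Or.inl (Or.inl ⟨s, hs, rfl⟩)
    · refine Or.inr ?_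
      rw [Set.mem_inv]
      rw [← map_inv, ← pw8.atOne_inv]
      exact Or.inl ⟨s⁻¹, hs, rfl⟩
  have hletter_inr : ∀ x : G, x ∈ Y ∪ Y⁻¹ → inr x ∈ gens ∪ gens⁻¹ := by
    intro x hx
    rcases hx with hx | hx
    · exact Or.inl (Or.inr ⟨x, hx, rfl⟩)
    · refine Or.inr ?_
      rw [Set.mem_inv, ← map_inv]
      exact Or.inr ⟨x⁻¹, hx, rfl⟩
  -- the shifting word
  set a : G := lG.prod with ha
  set v : List (Wreath P G) := lG.map inr with hv
  have hv_letters : ∀ x ∈ v, x ∈ gens ∪ gens⁻¹ := by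
    intro x hx
    obtain ⟨y, hy, rfl⟩ := List.mem_map.mp hx
    exact hletter_inr y (hlet y hy)
  have hv_prod : v.prod = inr a := List.prod_hom lG inr
  have hvmap : v.map (fun y => y⁻¹) = (lG.map (fun y => y⁻¹)).map inr := by
    rw [hv, List.map_map, List.map_map]
    apply List.map_congr_left
    intro y _
    show (inr y)⁻¹ = inr y⁻¹
    rw [map_inv]
  have hvmap_prod : (v.map (fun y => y⁻¹)).prod = 1 := by
    rw [hvmap, List.prod_hom _ inr, hinv, map_one]
  set vinv : List (Wreath P G) := (v.map (fun y => y⁻¹)).reverse with hvinv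
  have hvinv_letters : ∀ x ∈ vinv, x ∈ gens ∪ gens⁻¹ := by
    intro x hx
    rw [hvinv, List.mem_reverse] at hx
    obtain ⟨y, hy, rfl⟩ := List.mem_map.mp hx
    exact pw8.letters_inv (hv_letters y hy)
  have hvinv_prod : vinv.prod = (inr a)⁻¹ := by
    rw [hvinv, ← List.prod_inv_reverse, hv_prod]
  have hvinvmap_prod : (vinv.map (fun y => y⁻¹)).prod = 1 := by
    rw [hvinv, List.map_reverse, List.map_map]
    have : (v.map ((fun y : Wreath P G => y⁻¹) ∘ (fun y : Wreath P G => y⁻¹))) = v := by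
      simp
    rw [this, pw8.reverse_prod, hvmap_prod, inv_one]
  -- the basic commutators
  have hM0 : ∀ s t : P, s ∈ S ∪ S⁻¹ → t ∈ S ∪ S⁻¹ →
      inl ⁅((atOne s : restrictedBase P G))⁻¹, ((atOne t : restrictedBase P G))⁻¹⁆ ∈ pw8.Msub gens := by
    intro s t hs ht
    set sh : Wreath P G := inl (atOne s) with hsh
    set th : Wreath P G := inl (atOne t) with hth
    set r : List (Wreath P G) :=
      sh :: (v ++ (th :: (vinv ++ (sh⁻¹ :: (v ++ (th⁻¹ :: vinv)))))) with hr
    have hr_letters : ∀ x ∈ r, x ∈ gens ∪ gens⁻¹ := by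
      intro x hx
      rw [hr] at hx
      simp only [List.mem_cons, List.mem_append] at hx
      rcases hx with rfl | hx | rfl | hx | rfl | hx | rfl | hx
      · exact hletter_inl s hs
      · exact hv_letters x hx
      · exact hletter_inl t ht
      · exact hvinv_letters x hx
      · exact pw8.letters_inv (hletter_inl s hs)
      · exact hv_letters x hx
      · exact pw8.letters_inv (hletter_inl t ht)
      · exact hvinv_letters x hx
    have hconj : inr a * th * (inr a)⁻¹ = inl (pw8.dlt a t) := by
      rw [hth, ← map_inv]
      exact (SemidirectProduct.inl_aut a (atOne t)).symm
    have hr_prod : r.prod = 1 := by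
      have h1 : r.prod = sh * (inr a * th * (inr a)⁻¹) * sh⁻¹ *
          (inr a * th⁻¹ * (inr a)⁻¹) := by
        rw [hr]
        simp only [List.prod_cons, List.prod_append, hv_prod, hvinv_prod]
        group
      rw [h1, hconj]
      have hconj' : inr a * th⁻¹ * (inr a)⁻¹ = (inl (pw8.dlt a t))⁻¹ := by
        rw [← hconj]
        group
      rw [hconj', hsh, ← map_inv, ← map_inv, ← map_mul, ← map_mul, ← map_mul]
      have hc : atOne s * pw8.dlt a t = pw8.dlt a t * atOne s := by
        rw [← pw8.dlt_one_left]
        exact pw8.dlt_comm (fun h => hprod h.symm) s t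
      rw [hc]
      rw [show pw8.dlt a t * atOne s * (atOne s)⁻¹ * (pw8.dlt a t)⁻¹ = 1 by group]
      exact map_one inl
    set rθ : List (Wreath P G) := r.map (fun y => y⁻¹) with hrθ
    have hrθ_letters : ∀ x ∈ rθ, x ∈ gens ∪ gens⁻¹ := by
      intro x hx
      rw [hrθ] at hx
      obtain ⟨y, hy, rfl⟩ := List.mem_map.mp hx
      exact pw8.letters_inv (hr_letters y hy)
    have hstep : rθ.prod = sh⁻¹ * th⁻¹ * sh * th := by
      rw [hrθ, hr]
      simp only [List.map_cons, List.map_append, List.prod_cons, List.prod_append,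
        hvmap_prod, hvinvmap_prod, inv_inv]
      group
    have hrθ_prod : rθ.prod = inl ⁅((atOne s : restrictedBase P G))⁻¹, ((atOne t : restrictedBase P G))⁻¹⁆ := by
      rw [hstep, hsh, hth, ← map_inv, ← map_inv, ← map_mul, ← map_mul, ← map_mul]
      congr 1
      simp [commutatorElement_def]
    have hrθmap_prod : (rθ.map (fun y => y⁻¹)).prod = 1 := by
      rw [hrθ, List.map_map]
      have : (r.map ((fun y : Wreath P G => y⁻¹) ∘ (fun y : Wreath P G => y⁻¹))) = r := by
        simp
      rw [this, hr_prod]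
    have hpair := pw8.listpair_mem rθ hrθ_letters
    rw [hrθ_prod, hrθmap_prod] at hpair
    exact pw8.mem_Msub.mpr hpair
  have hM1 : ∀ s t : P, s ∈ S ∪ S⁻¹ → t ∈ S ∪ S⁻¹ →
      inl ⁅(atOne s : restrictedBase P G), (atOne t : restrictedBase P G)⁆ ∈ pw8.Msub gens := by
    intro s t hs ht
    have := hM0 s⁻¹ t⁻¹ (pw8.letters_inv hs) (pw8.letters_inv ht)
    rwa [pw8.atOne_inv, pw8.atOne_inv, inv_inv, inv_inv] at this
  -- commutators of deltas at the same point
  have hdltM : ∀ (x : G) (s t : P), s ∈ S ∪ S⁻¹ → t ∈ S ∪ S⁻¹ →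
      inl ⁅pw8.dlt x s, pw8.dlt x t⁆ ∈ pw8.Msub gens := by
    intro x s t hs ht
    have hconj := hnorm.conj_mem _ (hM1 s t hs ht) (inr x)
    have : inr x * inl ⁅(atOne s : restrictedBase P G), (atOne t : restrictedBase P G)⁆ * (inr x)⁻¹
        = inl ⁅pw8.dlt x s, pw8.dlt x t⁆ := by
      rw [← map_inv]
      rw [show inr x * inl ⁅(atOne s : restrictedBase P G), (atOne t : restrictedBase P G)⁆ * inr x⁻¹
          = inl ((wreathAction P G x) ⁅(atOne s : restrictedBase P G), (atOne t : restrictedBase P G)⁆) from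
        (SemidirectProduct.inl_aut x _).symm]
      rw [map_commutatorElement]
      rfl
    rwa [this] at hconj
  -- pass to the quotient
  set ρ : restrictedBase P G →* (Wreath P G) ⧸ (pw8.Msub gens) :=
    (QuotientGroup.mk' (pw8.Msub gens)).comp inl with hρ
  have hρ_eq_one : ∀ b : restrictedBase P G, inl b ∈ pw8.Msub gens → ρ b = 1 := by
    intro b hb
    exact (QuotientGroup.eq_one_iff _).mpr hb
  have hρ_mem : ∀ b : restrictedBase P G, ρ b = 1 → inl b ∈ pw8.Msub gens := by
    intro b hb
    exact (QuotientGroup.eq_one_iff _).mp hb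
  have hcommQ : ∀ (x y : G) (p q : P), Commute (ρ (pw8.dlt x p)) (ρ (pw8.dlt y q)) := by
    intro x y p q
    have hp : p ∈ Subgroup.closure S := by rw [hS]; trivial
    have main : ∀ q : P, Commute (ρ (pw8.dlt x p)) (ρ (pw8.dlt y q)) := by
      refine Subgroup.closure_induction
        (p := fun p _ => ∀ q : P, Commute (ρ (pw8.dlt x p)) (ρ (pw8.dlt y q)))
        (fun s hsS => ?_) (fun q => ?_) (fun u w _ _ hu hw q => ?_)
        (fun u _ hu q => ?_) hp
      · intro q
        have hq : q ∈ Subgroup.closure S := by rw [hS]; trivial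
        refine Subgroup.closure_induction
          (p := fun q _ => Commute (ρ (pw8.dlt x s)) (ρ (pw8.dlt y q)))
          (fun t htS => ?_) ?_ (fun u w _ _ hu hw => ?_) (fun u _ hu => ?_) hq
        · by_cases hxy : x = y
          · subst hxy
            rw [← commutatorElement_eq_one_iff_commute, ← map_commutatorElement]
            exact hρ_eq_one _ (hdltM x s t (Or.inl hsS) (Or.inl htS))
          · have : Commute (pw8.dlt x s) (pw8.dlt y t) := pw8.dlt_comm hxy s t
            exact this.map ρ
        · simp only [pw8.dlt_one, map_one]
          exact Commute.one_right _
        · simp only [pw8.dlt_mul, map_mul]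
          exact Commute.mul_right hu hw
        · simp only [pw8.dlt_inv, map_inv]
          exact Commute.inv_right hu
      · simp only [pw8.dlt_one, map_one]
        exact Commute.one_left _
      · simp only [pw8.dlt_mul, map_mul]
        exact Commute.mul_left (hu q) (hw q)
      · simp only [pw8.dlt_inv, map_inv]
        exact Commute.inv_left (hu q)
    exact main q
  have hBcomm : ∀ f g : restrictedBase P G, Commute (ρ f) (ρ g) := by
    intro f g
    have main : ∀ g : restrictedBase P G, Commute (ρ f) (ρ g) := by
      refine Subgroup.closure_induction
        (p := fun f _ => ∀ g : restrictedBase P G, Commute (ρ f) (ρ g))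
        (fun b hb => ?_) (fun g => ?_) (fun u w _ _ hu hw g => ?_)
        (fun u _ hu g => ?_) (pw8.base_gen f)
      · obtain ⟨x, p, rfl⟩ := hb
        intro g
        refine Subgroup.closure_induction
          (p := fun g _ => Commute (ρ (pw8.dlt x p)) (ρ g))
          (fun b' hb' => ?_) ?_ (fun u w _ _ hu hw => ?_) (fun u _ hu => ?_)
          (pw8.base_gen g)
        · obtain ⟨y, q, rfl⟩ := hb'
          exact hcommQ x y p q
        · simp only [map_one]; exact Commute.one_right _
        · simp only [map_mul]; exact Commute.mul_right hu hw
        · simp only [map_inv]; exact Commute.inv_right hu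
      · simp only [map_one]; exact Commute.one_left _
      · simp only [map_mul]; exact Commute.mul_left (hu g) (hw g)
      · simp only [map_inv]; exact Commute.inv_left (hu g)
    exact main g
  -- the base is perfect
  have hfC : ∀ f : restrictedBase P G,
      f ∈ Subgroup.closure {b : restrictedBase P G | ∃ u v : restrictedBase P G, ⁅u, v⁆ = b} := by
    intro f
    refine Subgroup.closure_induction (fun b hb => ?_) ?_
      (fun u w _ _ hu hw => Subgroup.mul_mem _ hu hw)
      (fun u _ hu => Subgroup.inv_mem _ hu) (pw8.base_gen f)
    · obtain ⟨x, p, rfl⟩ := hb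
      have hp : p ∈ (⊤ : Subgroup P) := trivial
      rw [← hperf, commutator_def, Subgroup.commutator_def] at hp
      refine Subgroup.closure_induction (fun g hg => ?_) ?_
        (fun u w _ _ hu hw => ?_) (fun u _ hu => ?_) hp
      · obtain ⟨g₁, _, g₂, _, rfl⟩ := hg
        simp only [← pw8.dltHom_apply, map_commutatorElement]
        exact Subgroup.subset_closure ⟨_, _, rfl⟩
      · simp only [pw8.dlt_one]; exact Subgroup.one_mem _
      · simp only [pw8.dlt_mul]; exact Subgroup.mul_mem _ hu hw
      · simp only [pw8.dlt_inv]; exact Subgroup.inv_mem _ hu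
    · exact Subgroup.one_mem _
  -- conclude
  intro f
  have : ∀ b ∈ Subgroup.closure {b : restrictedBase P G | ∃ u v : restrictedBase P G, ⁅u, v⁆ = b},
      inl b ∈ pw8.Msub gens := by
    intro b hb
    refine Subgroup.closure_induction (fun b' hb' => ?_) ?_
      (fun u w _ _ hu hw => ?_) (fun u _ hu => ?_) hb
    · obtain ⟨u, v', rfl⟩ := hb'
      apply hρ_mem
      rw [map_commutatorElement]
      exact commutatorElement_eq_one_iff_commute.mpr (hBcomm u v')
    · simp only [map_one]; exact Subgroup.one_mem _
    · simp only [map_mul]; exact Subgroup.mul_mem _ hu hw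
    · simp only [map_inv]; exact Subgroup.inv_mem _ hu
  exact this f (hfC f)

end PW8Core
/-- Let `P` be a finitely generated perfect group and `G` a non-abelian
finitely generated group with palindromic width `k = pw(G, X)` for a finite generating set
`X`. Then there is `c ∈ G` (possibly `c = 1`) such that for every finite generating set
`S` of `P`, every element of `P ≀ G` is a product of at most `k + 1` palindromes with
respect to the canonical copies of `X ∪ {c}` and of `S`. -/
theorem perfect_wreath_palindromic_width {P G : Type*} [Group P] [Group G]
    (hPfg : Group.FG P) (hperf : commutator P = ⊤)
    (X : Finset G) (hX : Subgroup.closure (X : Set G) = ⊤)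
    (hna : ∃ a b : G, a * b ≠ b * a)
    (k : ℕ) (hk : palWidth (X : Set G) = (k : ℕ∞)) :
    ∃ c : G, ∀ S : Finset P, Subgroup.closure (S : Set P) = ⊤ →
      ∀ g : Wreath P G,
        ProdOfPal (wreathGens (S : Set P) ((X : Set G) ∪ {c})) (k + 1) g := by
  obtain ⟨c, lG, hlet, hprodne, hinvone⟩ := pw8.exists_keyword (X : Set G) hX hna
  refine ⟨c, ?_⟩
  intro S hSgen g
  set Y : Set G := (X : Set G) ∪ {c} with hY
  have hYtop : Subgroup.closure Y = ⊤ := by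
    rw [eq_top_iff, ← hX]
    exact Subgroup.closure_mono Set.subset_union_left
  have hbase := pw8.base_in_Msub hperf hSgen hYtop lG hlet hprodne hinvone
  have hGpal : ∀ a : G, ProdOfPal (X : Set G) k a := pw8.palWidth_spec _ k hk
  obtain ⟨lp, hlen, hpal, hprod2⟩ := hGpal g.right
  refine ⟨SemidirectProduct.inl g.left ::
    lp.map ⇑(SemidirectProduct.inr : G →* Wreath P G), ?_, ?_, ?_⟩
  · simp only [List.length_cons, List.length_map]
    omega
  · intro p hp
    rcases List.mem_cons.mp hp with rfl | hp
    · exact pw8.pal_of_pair_one (pw8.mem_Msub.mp (hbase g.left))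
    · obtain ⟨q, hq, rfl⟩ := List.mem_map.mp hp
      obtain ⟨l, hl, hrev, hlp⟩ := hpal q hq
      refine ⟨l.map ⇑(SemidirectProduct.inr : G →* Wreath P G), ?_, ?_, ?_⟩
      · intro x hx
        obtain ⟨y, hy, rfl⟩ := List.mem_map.mp hx
        rcases hl y hy with h | h
        · exact Or.inl (Or.inr ⟨y, Or.inl h, rfl⟩)
        · refine Or.inr ?_
          rw [Set.mem_inv, ← map_inv]
          exact Or.inr ⟨y⁻¹, Or.inl (Set.mem_inv.mp h), rfl⟩
      · rw [← List.map_reverse, hrev]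
      · rw [List.prod_hom, hlp]
  · rw [List.prod_cons, List.prod_hom, hprod2,
      SemidirectProduct.inl_left_mul_inr_right]
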